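/- The group Γ(2)/{±I} is generated by the transformations τ ↦ τ + 2 and τ ↦ τ/(2τ + 1), and is a free group of rank 2. -/

import Mathlib

open Matrix MatrixGroups UpperHalfPlane

/-- `Γ(2)`, the kernel of reduction mod 2 on `SL(2,ℤ)`. -/
def GammaTwo : Subgroup SL(2, ℤ) :=
  (Matrix.SpecialLinearGroup.map (Int.castRingHom (ZMod 2))).ker

/-- The matrix `T² = [[1,2],[0,1]]`. -/
def Tsq : SL(2, ℤ) := ⟨!![1, 2; 0, 1], by norm_num [Matrix.det_fin_two_of]⟩

/-- The matrix `S₂ = [[1,0],[2,1]]`. -/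
def Stwo : SL(2, ℤ) := ⟨!![1, 0; 2, 1], by norm_num [Matrix.det_fin_two_of]⟩

/-! ### Membership and parity facts -/

lemma mem_gammaTwo_iff (A : SL(2,ℤ)) : A ∈ GammaTwo ↔
    Odd (A.1 0 0) ∧ Even (A.1 0 1) ∧ Even (A.1 1 0) ∧ Odd (A.1 1 1) := by
  rw [GammaTwo, MonoidHom.mem_ker]
  have key : ∀ (B : SL(2, ZMod 2)), B = 1 ↔
      (B.1 0 0 = 1 ∧ B.1 0 1 = 0 ∧ B.1 1 0 = 0 ∧ B.1 1 1 = 1) := by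
    intro B
    constructor
    · rintro rfl; norm_num
    · rintro ⟨h1, h2, h3, h4⟩
      ext i j
      fin_cases i <;> fin_cases j <;>
        simpa [Matrix.SpecialLinearGroup.coe_one] using (by assumption : _)
  rw [key]
  have e : ∀ i j, ((Matrix.SpecialLinearGroup.map (n := Fin 2) (Int.castRingHom (ZMod 2)) A).1 i j)
      = ((A.1 i j : ℤ) : ZMod 2) := by
    intro i j; rfl
  rw [e, e, e, e]
  have o : ∀ m : ℤ, ((m : ZMod 2) = 1) ↔ Odd m := by
    intro m
    rw [Int.odd_iff, show (1 : ZMod 2) = ((1 : ℤ) : ZMod 2) from rfl,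
      ZMod.intCast_eq_intCast_iff, Int.ModEq]
    norm_num
  have ev : ∀ m : ℤ, ((m : ZMod 2) = 0) ↔ Even m := by
    intro m
    rw [ZMod.intCast_zmod_eq_zero_iff_dvd, Int.even_iff]
    omega
  rw [o, o, ev, ev]

lemma Tsq_mem : Tsq ∈ GammaTwo := by
  rw [mem_gammaTwo_iff]
  refine ⟨⟨0, by simp [Tsq]⟩, ⟨1, by simp [Tsq]⟩, ⟨0, by simp [Tsq]⟩, ⟨0, by simp [Tsq]⟩⟩

lemma Stwo_mem : Stwo ∈ GammaTwo := by
  rw [mem_gammaTwo_iff]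
  refine ⟨⟨0, by simp [Stwo]⟩, ⟨0, by simp [Stwo]⟩, ⟨1, by simp [Stwo]⟩, ⟨0, by simp [Stwo]⟩⟩

/-! ### Powers of the generators -/

lemma Tsq_zpow (n : ℤ) : (Tsq ^ n).1 = !![1, 2*n; 0, 1] := by
  induction n using Int.induction_on with
  | zero => simp [Matrix.one_fin_two]
  | succ k ih =>
      rw [_root_.zpow_add_one, Matrix.SpecialLinearGroup.coe_mul, ih]
      simp [Tsq, Matrix.mul_fin_two]; ring_nf
  | pred k ih =>
      rw [_root_.zpow_sub_one, Matrix.SpecialLinearGroup.coe_mul, ih]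
      have hinv : (Tsq⁻¹).1 = !![1, -2; 0, 1] := by
        have h : Tsq⁻¹ = ⟨!![1, -2; 0, 1], by norm_num [Matrix.det_fin_two_of]⟩ := by
          apply inv_eq_of_mul_eq_one_right
          ext i j
          fin_cases i <;> fin_cases j <;> rfl
        rw [h]
      rw [hinv]
      simp [Matrix.mul_fin_two]; ring_nf

lemma Stwo_zpow (n : ℤ) : (Stwo ^ n).1 = !![1, 0; 2*n, 1] := by
  induction n using Int.induction_on with
  | zero => simp [Matrix.one_fin_two]
  | succ k ih =>
      rw [_root_.zpow_add_one, Matrix.SpecialLinearGroup.coe_mul, ih]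
      simp [Stwo, Matrix.mul_fin_two]; ring_nf
  | pred k ih =>
      rw [_root_.zpow_sub_one, Matrix.SpecialLinearGroup.coe_mul, ih]
      have hinv : (Stwo⁻¹).1 = !![1, 0; -2, 1] := by
        have h : Stwo⁻¹ = ⟨!![1, 0; -2, 1], by norm_num [Matrix.det_fin_two_of]⟩ := by
          apply inv_eq_of_mul_eq_one_right
          ext i j
          fin_cases i <;> fin_cases j <;> rfl
        rw [h]
      rw [hinv]
      simp [Matrix.mul_fin_two]; ring_nf

/-! ### The Euclidean reduction step -/

lemma exists_reduce (x y : ℤ) (hy : y ≠ 0) (hpar : (x + y) % 2 = 1) :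
    ∃ n : ℤ, (x + n * (2 * y)).natAbs < y.natAbs := by
  rcases hy.lt_or_gt with h | h
  · have hb : (0:ℤ) < 2 * (-y) := by linarith
    set b := 2 * (-y) with hbdef
    have h1 : 0 ≤ x % b := Int.emod_nonneg x hb.ne'
    have h2 : x % b < b := Int.emod_lt_of_pos x hb
    have h3 : b * (x / b) + x % b = x := Int.mul_ediv_add_emod x b
    have hxpar : ∃ m, x = 2 * m + x % b := ⟨(-y) * (x / b), by linear_combination -h3⟩
    by_cases hr : x % b < -y
    · refine ⟨x / b, ?_⟩
      have key : x + (x / b) * (2 * y) = x % b := by linear_combination -h3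
      rw [key]; omega
    · refine ⟨x / b + 1, ?_⟩
      have key : x + (x / b + 1) * (2 * y) = x % b - b := by linear_combination -h3
      rw [key]
      obtain ⟨m, hm⟩ := hxpar
      omega
  · have hb : (0:ℤ) < 2 * y := by linarith
    set b := 2 * y with hbdef
    have h1 : 0 ≤ x % b := Int.emod_nonneg x hb.ne'
    have h2 : x % b < b := Int.emod_lt_of_pos x hb
    have h3 : b * (x / b) + x % b = x := Int.mul_ediv_add_emod x b
    have hxpar : ∃ m, x = 2 * m + x % b := ⟨y * (x / b), by linear_combination -h3⟩
    by_cases hr : x % b < y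
    · refine ⟨-(x / b), ?_⟩
      have key : x + (-(x / b)) * (2 * y) = x % b := by linear_combination -h3
      rw [key]; omega
    · refine ⟨-(x / b) - 1, ?_⟩
      have key : x + (-(x / b) - 1) * (2 * y) = x % b - b := by linear_combination -h3
      rw [key]
      obtain ⟨m, hm⟩ := hxpar
      omega

/-! ### Generation: `Γ(2) ≤ ⟨T², S₂, -1⟩` -/

lemma gammaTwo_le_K : GammaTwo ≤ Subgroup.closure {Tsq, Stwo, -1} := by
  set K := Subgroup.closure {Tsq, Stwo, -1} with hK
  have hTK : Tsq ∈ K := Subgroup.subset_closure (by simp)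
  have hSK : Stwo ∈ K := Subgroup.subset_closure (by simp)
  have hNK : (-1 : SL(2,ℤ)) ∈ K := Subgroup.subset_closure (by simp)
  suffices H : ∀ n : ℕ, ∀ A : SL(2,ℤ), A ∈ GammaTwo → (A.1 1 0).natAbs = n → A ∈ K by
    intro A hA; exact H _ A hA rfl
  intro n
  induction n using Nat.strong_induction_on with
  | _ n ih =>
    intro A hA hn
    obtain ⟨ha, hb, hc, hd⟩ := (mem_gammaTwo_iff A).mp hA
    have hdet : A.1 0 0 * A.1 1 1 - A.1 0 1 * A.1 1 0 = 1 := by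
      have := A.2
      rwa [Matrix.det_fin_two] at this
    by_cases hc0 : A.1 1 0 = 0
    · rw [hc0, mul_zero, sub_zero] at hdet
      obtain ⟨k, hk⟩ := hb
      rcases (Int.mul_eq_one_iff_eq_one_or_neg_one).mp hdet with ⟨h1, h2⟩ | ⟨h1, h2⟩
      · have hA' : A = Tsq ^ k := by
          ext i j
          rw [Tsq_zpow]
          fin_cases i <;> fin_cases j <;> simp [h1, h2, hc0] <;> omega
        rw [hA']; exact zpow_mem hTK k
      · have hA' : A = -1 * Tsq ^ (-k) := by
          ext i j
          have hcoe : ((-1 * Tsq ^ (-k) : SL(2,ℤ))).1 = -(Tsq ^ (-k)).1 := by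
            rw [Matrix.SpecialLinearGroup.coe_mul, Matrix.SpecialLinearGroup.coe_neg,
              Matrix.SpecialLinearGroup.coe_one]
            simp
          rw [hcoe, Tsq_zpow]
          fin_cases i <;> fin_cases j <;> simp [h1, h2, hc0] <;> omega
        rw [hA']
        exact mul_mem hNK (zpow_mem hTK (-k))
    · have ha0 : A.1 0 0 ≠ 0 := by rintro h; rw [Int.odd_iff] at ha; omega
      have hpar1 : (A.1 0 0 + A.1 1 0) % 2 = 1 := by
        rw [Int.odd_iff] at ha; rw [Int.even_iff] at hc; omega
      obtain ⟨p, hp⟩ := exists_reduce (A.1 0 0) (A.1 1 0) hc0 hpar1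
      set A' := Tsq ^ p * A with hA'
      have hA'mem : A' ∈ GammaTwo := mul_mem (zpow_mem Tsq_mem p) hA
      have hA'00 : A'.1 0 0 = A.1 0 0 + p * (2 * A.1 1 0) := by
        rw [hA', Matrix.SpecialLinearGroup.coe_mul, Tsq_zpow]
        simp [Matrix.mul_apply, Fin.sum_univ_two]
        ring
      have hA'10 : A'.1 1 0 = A.1 1 0 := by
        rw [hA', Matrix.SpecialLinearGroup.coe_mul, Tsq_zpow]
        simp [Matrix.mul_apply, Fin.sum_univ_two]
      have ha'0 : A'.1 0 0 ≠ 0 := by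
        have := (mem_gammaTwo_iff A').mp hA'mem
        rw [Int.odd_iff] at *
        rintro h; omega
      have hpar2 : (A'.1 1 0 + A'.1 0 0) % 2 = 1 := by
        obtain ⟨ha', hb', hc', hd'⟩ := (mem_gammaTwo_iff A').mp hA'mem
        rw [Int.odd_iff] at ha'; rw [Int.even_iff] at hc'; omega
      obtain ⟨q, hq⟩ := exists_reduce (A'.1 1 0) (A'.1 0 0) ha'0 hpar2
      set A'' := Stwo ^ q * A' with hA''
      have hA''mem : A'' ∈ GammaTwo := mul_mem (zpow_mem Stwo_mem q) hA'mem
      have hA''10 : A''.1 1 0 = A'.1 1 0 + q * (2 * A'.1 0 0) := by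
        rw [hA'', Matrix.SpecialLinearGroup.coe_mul, Stwo_zpow]
        simp [Matrix.mul_apply, Fin.sum_univ_two]
        ring
      have hlt : (A''.1 1 0).natAbs < n := by
        rw [hA''10, ← hn]
        calc (A'.1 1 0 + q * (2 * A'.1 0 0)).natAbs < (A'.1 0 0).natAbs := hq
        _ ≤ (A.1 1 0).natAbs := by rw [hA'00] at *; omega
      have hK'' : A'' ∈ K := ih _ hlt A'' hA''mem rfl
      have hAeq : A = (Tsq ^ p)⁻¹ * ((Stwo ^ q)⁻¹ * A'') := by
        rw [hA'', hA']; group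
      rw [hAeq]
      exact mul_mem (inv_mem (zpow_mem hTK p)) (mul_mem (inv_mem (zpow_mem hSK q)) hK'')

/-! ### The center of `SL(2,ℤ)` -/

lemma center_eq_pm_one (g : SL(2,ℤ)) (hg : g ∈ Subgroup.center SL(2,ℤ)) :
    g = 1 ∨ g = -1 := by
  have hT := Subgroup.mem_center_iff.mp hg Tsq
  have hS := Subgroup.mem_center_iff.mp hg Stwo
  have hT' := fun i j => congrFun (congrFun (congrArg Subtype.val hT) i) j
  have hS' := fun i j => congrFun (congrFun (congrArg Subtype.val hS) i) j
  simp only [Matrix.SpecialLinearGroup.coe_mul] at hT' hS'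
  simp only [Matrix.SpecialLinearGroup.coe_mul, Tsq, Stwo, Matrix.mul_apply,
    Fin.sum_univ_two] at hT' hS'
  have e1 := hT' 0 0
  have e2 := hT' 0 1
  have e3 := hS' 0 0
  have e4 := hS' 1 1
  simp at e1 e2 e3 e4
  have hdet : g.1 0 0 * g.1 1 1 - g.1 0 1 * g.1 1 0 = 1 := by
    have := g.2; rwa [Matrix.det_fin_two] at this
  have hc : g.1 1 0 = 0 := by omega
  have hbd : g.1 0 1 = 0 ∧ g.1 0 0 = g.1 1 1 := by constructor <;> omega
  have ha : g.1 0 0 = 1 ∨ g.1 0 0 = -1 := by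
    rcases hbd with ⟨h1, h2⟩
    rw [hc, h1, ← h2] at hdet
    simp at hdet
    rcases Int.mul_eq_one_iff_eq_one_or_neg_one.mp hdet with ⟨h,_⟩|⟨h,_⟩ <;>
      [left; right] <;> exact h
  rcases ha with h | h
  · left; ext i j
    fin_cases i <;> fin_cases j <;>
      simp [Matrix.SpecialLinearGroup.coe_one] <;> omega
  · right; ext i j
    have hcoe : ((-1 : SL(2,ℤ))).1 = -(1 : Matrix (Fin 2) (Fin 2) ℤ) := by
      rw [Matrix.SpecialLinearGroup.coe_neg, Matrix.SpecialLinearGroup.coe_one]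
    rw [hcoe]
    fin_cases i <;> fin_cases j <;> simp <;> omega

lemma neg_one_mem_center : (-1 : SL(2,ℤ)) ∈ Subgroup.center SL(2,ℤ) := by
  rw [Subgroup.mem_center_iff]
  intro g
  rw [neg_one_mul, mul_neg_one]

/-! ### The action of `PSL(2,ℤ)` on `ℍ` -/

abbrev Q2 := SL(2, ℤ) ⧸ Subgroup.center SL(2, ℤ)

noncomputable def rho : Q2 →* Equiv.Perm ℍ :=
  QuotientGroup.lift _ (MulAction.toPermHom SL(2,ℤ) ℍ) (by
    intro g hg
    rcases center_eq_pm_one g hg with rfl | rfl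
    · ext z; simp
    · ext z
      simpa using ModularGroup.SL_neg_smul 1 z)

noncomputable instance : MulAction Q2 ℍ where
  smul q z := rho q z
  one_smul z := by show rho 1 z = z; simp
  mul_smul q r z := by
    show rho (q * r) z = rho q (rho r z)
    simp [_root_.map_mul]

lemma quot_smul (g : SL(2,ℤ)) (z : ℍ) :
    (QuotientGroup.mk' (Subgroup.center SL(2,ℤ)) g) • z = g • z := rfl

/-! ### Moebius computations -/

noncomputable def F (z : ℍ) : ℝ := (-(z:ℂ)⁻¹).re

lemma Tsq_smul (z : ℍ) : (Tsq • z).re = z.re + 2 := by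
  have hT : Tsq = ModularGroup.T ^ (2:ℤ) := by
    ext i j
    rw [ModularGroup.coe_T_zpow]
    fin_cases i <;> fin_cases j <;> simp [Tsq]
  rw [hT, modular_T_zpow_smul]
  simp [vadd_re]; ring

lemma Tsq_inv_smul (z : ℍ) : (Tsq⁻¹ • z).re = z.re - 2 := by
  have hT : Tsq⁻¹ = ModularGroup.T ^ (-2:ℤ) := by
    rw [show ((-2:ℤ)) = -(2:ℤ) from rfl, _root_.zpow_neg]
    congr 1
    ext i j
    rw [ModularGroup.coe_T_zpow]
    fin_cases i <;> fin_cases j <;> simp [Tsq]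
  rw [hT, modular_T_zpow_smul]
  simp [vadd_re]; ring

lemma denom_ne (z : ℍ) : (2:ℂ) * (z:ℂ) + 1 ≠ 0 := by
  intro h
  have h2 := congrArg Complex.im h
  simp [coe_im] at h2
  exact absurd h2 (ne_of_gt z.im_pos)

lemma Stwo_smul_coe (z : ℍ) : ((Stwo • z : ℍ) : ℂ) = z / (2 * z + 1) := by
  rw [specialLinearGroup_apply]
  simp [Stwo]

lemma F_Stwo_smul (z : ℍ) : F (Stwo • z) = F z - 2 := by
  have h2 : -(((Stwo • z : ℍ)  : ℂ))⁻¹ = -(z:ℂ)⁻¹ - 2 := by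
    rw [Stwo_smul_coe]
    have hz := ne_zero z
    have hd := denom_ne z
    field_simp
    ring
  rw [F, F, h2]
  simp

lemma Stwo_inv_smul_coe (z : ℍ) : ((Stwo⁻¹ • z : ℍ) : ℂ) = z / (-2 * z + 1) := by
  have h : Stwo⁻¹ = (⟨!![1, 0; -2, 1], by norm_num [Matrix.det_fin_two_of]⟩ : SL(2,ℤ)) := by
    apply inv_eq_of_mul_eq_one_right
    ext i j
    fin_cases i <;> fin_cases j <;> rfl
  have hc : ∀ i j, (Stwo⁻¹ : SL(2,ℤ)) i j = !![(1:ℤ), 0; -2, 1] i j := by rw [h]; intro i j; rfl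
  rw [specialLinearGroup_apply]
  simp [hc]

lemma denom_ne' (z : ℍ) : (-2:ℂ) * (z:ℂ) + 1 ≠ 0 := by
  intro h
  have h2 := congrArg Complex.im h
  simp [coe_im] at h2
  exact absurd h2 (ne_of_gt z.im_pos)

lemma F_Stwo_inv_smul (z : ℍ) : F (Stwo⁻¹ • z) = F z + 2 := by
  have h2 : -(((Stwo⁻¹ • z : ℍ) : ℂ))⁻¹ = -(z:ℂ)⁻¹ + 2 := by
    rw [Stwo_inv_smul_coe]
    have hz := ne_zero z
    have hd := denom_ne' z
    field_simp
    ring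
  rw [F, F, h2]
  simp

lemma F_eq (z : ℍ) : F z = -(z.re / Complex.normSq z) := by
  rw [F]
  simp [Complex.inv_re, coe_re]

lemma normSq_eq (z : ℍ) : Complex.normSq (z:ℂ) = z.re ^ 2 + z.im ^ 2 := by
  rw [Complex.normSq_apply, coe_re, coe_im]; ring

/-! ### Ping-pong -/

noncomputable def pi2 : SL(2,ℤ) →* Q2 := QuotientGroup.mk' (Subgroup.center SL(2, ℤ))

lemma quot_smul' (g : SL(2,ℤ)) (z : ℍ) : (pi2 g) • z = g • z := rfl

noncomputable def gens : Fin 2 → Q2 := ![pi2 Tsq, pi2 Stwo]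
noncomputable def XX : Fin 2 → Set ℍ := ![{z | 1 ≤ z.re}, {z | F z ≤ -1}]
noncomputable def YY : Fin 2 → Set ℍ := ![{z | z.re ≤ -1}, {z | 1 ≤ F z}]

lemma F_le_neg_one {z : ℍ} (h : F z ≤ -1) : z.re ^ 2 + z.im ^ 2 ≤ z.re := by
  rw [F_eq] at h
  have hpos : 0 < Complex.normSq (z:ℂ) := Complex.normSq_pos.mpr (ne_zero z)
  have h1 : 1 ≤ z.re / Complex.normSq (z:ℂ) := by linarith
  rw [le_div_iff₀ hpos] at h1
  rw [normSq_eq] at *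
  linarith

lemma one_le_F {z : ℍ} (h : 1 ≤ F z) : z.re ≤ -(z.re ^ 2 + z.im ^ 2) := by
  rw [F_eq] at h
  have hpos : 0 < Complex.normSq (z:ℂ) := Complex.normSq_pos.mpr (ne_zero z)
  have h1 : z.re / Complex.normSq (z:ℂ) ≤ -1 := by linarith
  rw [div_le_iff₀ hpos] at h1
  rw [normSq_eq] at *
  linarith

lemma not_F_le {z : ℍ} (h : ¬ (1 ≤ F z)) : -(z.re ^2 + z.im ^2) < z.re := by
  by_contra hc
  push_neg at hc
  apply h
  rw [F_eq]
  have hpos : 0 < Complex.normSq (z:ℂ) := Complex.normSq_pos.mpr (ne_zero z)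
  rw [le_neg, div_le_iff₀ hpos, normSq_eq]
  linarith

lemma not_neg_F {z : ℍ} (h : ¬ (F z ≤ -1)) : z.re < z.re ^2 + z.im ^2 := by
  by_contra hc
  push_neg at hc
  apply h
  rw [F_eq]
  have hpos : 0 < Complex.normSq (z:ℂ) := Complex.normSq_pos.mpr (ne_zero z)
  rw [neg_le_neg_iff, le_div_iff₀ hpos, normSq_eq]  -- check direction
  linarith

lemma lift_gens_injective : Function.Injective (FreeGroup.lift gens) := by
  apply FreeGroup.injective_lift_of_ping_pong gens XX YY
  · rw [Fin.forall_fin_two]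
    constructor
    · exact ⟨⟨Complex.I + 1, by simp⟩, by
        show (1:ℝ) ≤ _
        simp [UpperHalfPlane.re]⟩
    · have hz2 : (0:ℝ) < (⟨1/2, 1/2⟩ : ℂ).im := by norm_num
      refine ⟨⟨⟨1/2, 1/2⟩, hz2⟩, ?_⟩
      show F ⟨⟨1/2,1/2⟩, hz2⟩ ≤ -1
      rw [F_eq]
      have hre : UpperHalfPlane.re (⟨⟨1/2,1/2⟩, hz2⟩ : ℍ) = 1/2 := rfl
      have hns : Complex.normSq (UpperHalfPlane.coe ⟨⟨1/2,1/2⟩, hz2⟩) = 1/2 := by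
        simp [UpperHalfPlane.coe, Complex.normSq_mk]
        norm_num
      rw [hre, hns]
      norm_num
  · intro i j hij
    have him : ∀ z : ℍ, 0 < z.im := fun z => z.im_pos
    fin_cases i <;> fin_cases j <;> simp only [ne_eq, not_true] at hij <;> try exact absurd rfl hij
    · show Disjoint (XX 0) (XX 1)
      rw [Set.disjoint_left]
      intro z h1 h2
      have h1' : 1 ≤ z.re := h1
      have h2' := F_le_neg_one (h2 : F z ≤ -1)
      nlinarith [him z]
    · show Disjoint (XX 1) (XX 0)
      rw [Set.disjoint_left]
      intro z h1 h2
      have h2' : 1 ≤ z.re := h2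
      have h1' := F_le_neg_one (h1 : F z ≤ -1)
      nlinarith [him z]
  · intro i j hij
    have him : ∀ z : ℍ, 0 < z.im := fun z => z.im_pos
    fin_cases i <;> fin_cases j <;> simp only [ne_eq, not_true] at hij <;> try exact absurd rfl hij
    · show Disjoint (YY 0) (YY 1)
      rw [Set.disjoint_left]
      intro z h1 h2
      have h1' : z.re ≤ -1 := h1
      have h2' := one_le_F (h2 : 1 ≤ F z)
      nlinarith [him z]
    · show Disjoint (YY 1) (YY 0)
      rw [Set.disjoint_left]
      intro z h1 h2
      have h2' : z.re ≤ -1 := h2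
      have h1' := one_le_F (h1 : 1 ≤ F z)
      nlinarith [him z]
  · have him : ∀ z : ℍ, 0 < z.im := fun z => z.im_pos
    rw [Fin.forall_fin_two]
    constructor <;> rw [Fin.forall_fin_two] <;> constructor
    · show Disjoint (XX 0) (YY 0)
      rw [Set.disjoint_left]; intro z h1 h2
      have h1' : 1 ≤ z.re := h1
      have h2' : z.re ≤ -1 := h2
      linarith
    · show Disjoint (XX 0) (YY 1)
      rw [Set.disjoint_left]; intro z h1 h2
      have h1' : 1 ≤ z.re := h1
      have h2' := one_le_F (h2 : 1 ≤ F z)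
      nlinarith [him z]
    · show Disjoint (XX 1) (YY 0)
      rw [Set.disjoint_left]; intro z h1 h2
      have h1' := F_le_neg_one (h1 : F z ≤ -1)
      have h2' : z.re ≤ -1 := h2
      nlinarith [him z]
    · show Disjoint (XX 1) (YY 1)
      rw [Set.disjoint_left]; intro z h1 h2
      have h1' := F_le_neg_one (h1 : F z ≤ -1)
      have h2' := one_le_F (h2 : 1 ≤ F z)
      nlinarith [him z]
  · rw [Fin.forall_fin_two]
    constructor
    · rintro w ⟨z, hz, rfl⟩
      have hz' : ¬ (z.re ≤ -1) := hz
      show (1:ℝ) ≤ (((gens 0) • z : ℍ)).re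
      have : gens 0 = pi2 Tsq := rfl
      rw [this, quot_smul', Tsq_smul]
      linarith [not_le.mp hz']
    · rintro w ⟨z, hz, rfl⟩
      have hz' : ¬ (1 ≤ F z) := hz
      show F ((gens 1) • z) ≤ -1
      have : gens 1 = pi2 Stwo := rfl
      rw [this, quot_smul', F_Stwo_smul]
      linarith [not_le.mp hz']
  · rw [Fin.forall_fin_two]
    constructor
    · rintro w ⟨z, hz, rfl⟩
      have hz' : ¬ ((1:ℝ) ≤ z.re) := hz
      show ((gens⁻¹ 0 • z : ℍ)).re ≤ -1
      have h0 : gens⁻¹ 0 = pi2 Tsq⁻¹ := by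
        show (gens 0)⁻¹ = _
        rw [show gens 0 = pi2 Tsq from rfl, ← map_inv]
      rw [h0, quot_smul', Tsq_inv_smul]
      linarith [not_le.mp hz']
    · rintro w ⟨z, hz, rfl⟩
      have hz' : ¬ (F z ≤ -1) := hz
      show (1:ℝ) ≤ F ((gens⁻¹ 1) • z)
      have h1 : gens⁻¹ 1 = pi2 Stwo⁻¹ := by
        show (gens 1)⁻¹ = _
        rw [show gens 1 = pi2 Stwo from rfl, ← map_inv]
      rw [h1, quot_smul', F_Stwo_inv_smul]
      linarith [not_le.mp hz']

/-! ### Main theorem -/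

/-- The image of `Γ(2)` in `PSL(2,ℤ) = SL(2,ℤ)/{±I}` is generated by the
classes of `τ ↦ τ + 2` and `τ ↦ τ/(2τ+1)`, and is a free group of rank 2. -/
theorem GammaTwo_mod_center_free_of_rank_two :
    Subgroup.map (QuotientGroup.mk' (Subgroup.center SL(2, ℤ))) GammaTwo =
      Subgroup.closure {QuotientGroup.mk' (Subgroup.center SL(2, ℤ)) Tsq,
                        QuotientGroup.mk' (Subgroup.center SL(2, ℤ)) Stwo} ∧
    Nonempty
      ((Subgroup.map (QuotientGroup.mk' (Subgroup.center SL(2, ℤ))) GammaTwo) ≃*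
        FreeGroup (Fin 2)) := by
  have hmain : Subgroup.map (QuotientGroup.mk' (Subgroup.center SL(2, ℤ))) GammaTwo =
      Subgroup.closure {QuotientGroup.mk' (Subgroup.center SL(2, ℤ)) Tsq,
                        QuotientGroup.mk' (Subgroup.center SL(2, ℤ)) Stwo} := by
    apply le_antisymm
    · rintro x hx
      obtain ⟨A, hA, rfl⟩ := hx
      have hK := gammaTwo_le_K hA
      have himg : (QuotientGroup.mk' (Subgroup.center SL(2, ℤ))) A ∈
          Subgroup.map (QuotientGroup.mk' (Subgroup.center SL(2, ℤ)))
            (Subgroup.closure {Tsq, Stwo, -1}) := ⟨A, hK, rfl⟩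
      rw [MonoidHom.map_closure] at himg
      refine (Subgroup.closure_le _).mpr ?_ himg
      rintro x ⟨y, hy, rfl⟩
      simp only [Set.mem_insert_iff, Set.mem_singleton_iff] at hy
      rcases hy with rfl | rfl | rfl
      · exact Subgroup.subset_closure (by simp)
      · exact Subgroup.subset_closure (by simp)
      · have h1 : (QuotientGroup.mk' (Subgroup.center SL(2, ℤ))) (-1) = 1 :=
          (QuotientGroup.eq_one_iff _).mpr neg_one_mem_center
        rw [h1]
        exact one_mem _
    · rw [Subgroup.closure_le]
      rintro x (rfl | rfl)
      · exact ⟨Tsq, Tsq_mem, rfl⟩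
      · exact ⟨Stwo, Stwo_mem, rfl⟩
  refine ⟨hmain, ?_⟩
  have hrange : (FreeGroup.lift gens).range =
      Subgroup.closure {QuotientGroup.mk' (Subgroup.center SL(2, ℤ)) Tsq,
                        QuotientGroup.mk' (Subgroup.center SL(2, ℤ)) Stwo} := by
    rw [FreeGroup.range_lift_eq_closure]
    congr 1
    ext x
    constructor
    · rintro ⟨i, rfl⟩
      fin_cases i <;> simp [gens, pi2]
    · rintro (rfl | rfl)
      · exact ⟨0, by simp [gens, pi2]⟩
      · exact ⟨1, by simp [gens, pi2]⟩
  exact ⟨(MulEquiv.subgroupCongr (hmain.trans hrange.symm)).trans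
    (MonoidHom.ofInjective lift_gens_injective).symm⟩
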